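/- Let T, U, V be pairwise compatible conditional expectation operators on a T-universally complete Riesz space E with weak order unit e = Te, and suppose U, V are averaging operators fixing R(T). Then α_T(U,V) ≤ φ_T(U,V), where α_T(U,V) = sup{|TPQe − TPe·TQe| : P ∈ B(U), Q ∈ B(V)} and φ_T(U,V) = sup_{Q ∈ B(V)} ‖UQe − TQe‖_{T,∞}. -/

import Mathlib

/-- A band projection on a Riesz space. -/
def IsBandProj {E : Type*} [ConditionallyCompleteLattice E] [AddCommGroup E] [Module ℝ E]
    (P : E →ₗ[ℝ] E) : Prop :=
  (∀ f : E, P (P f) = P f) ∧ ∀ f : E, 0 ≤ f → 0 ≤ P f ∧ P f ≤ f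

section Aux

variable {E : Type*} [ConditionallyCompleteLattice E] [CommRing E]
    [CovariantClass E E (· + ·) (· ≤ ·)] [Module ℝ E]

lemma aux_neg_le_of_add (a b : E) (h : 0 ≤ a + b) : -b ≤ a := by
  calc -b = 0 - b := (zero_sub _).symm
    _ ≤ (a + b) - b := sub_le_sub_right h _
    _ = a := by ring

lemma aux_neg_le_abs (a : E) : -a ≤ |a| := by
  have h := le_abs_self (-a)
  rwa [abs_neg] at h

lemma aux_neg_abs_le (a : E) : -|a| ≤ a := neg_le.1 (aux_neg_le_abs a)

/-- In an f-algebra, disjoint (nonnegative) elements multiply to zero. -/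
lemma aux_mul_disjoint
    (hfalg : ∀ a b : E, a ⊓ b = 0 → ∀ w : E, 0 ≤ w → (w * a) ⊓ b = 0 ∧ (a * w) ⊓ b = 0)
    {a b : E} (hab : a ⊓ b = 0) : a * b = 0 := by
  have ha : 0 ≤ a := by rw [← hab]; exact inf_le_left
  have hb : 0 ≤ b := by rw [← hab]; exact inf_le_right
  have h1 : b ⊓ a = 0 := by rw [inf_comm]; exact hab
  have h2 : (a * b) ⊓ a = 0 := (hfalg b a h1 a ha).1
  have h3 : a ⊓ (a * b) = 0 := by rw [inf_comm]; exact h2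
  have h4 : (b * a) ⊓ (a * b) = 0 := (hfalg a (a * b) h3 b hb).1
  rwa [mul_comm b a, inf_idem] at h4

/-- A positive projection dominated by the identity acts as multiplication by `P 1`
on the order interval `[0,1]`. -/
lemma aux_bandproj_mul
    (hfalg : ∀ a b : E, a ⊓ b = 0 → ∀ w : E, 0 ≤ w → (w * a) ⊓ b = 0 ∧ (a * w) ⊓ b = 0)
    {P : E →ₗ[ℝ] E} (hP : IsBandProj P) (h01 : (0:E) ≤ 1)
    {q : E} (hq0 : 0 ≤ q) (hqe : q ≤ 1) :
    P q = P 1 * q := by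
  have hp0 : 0 ≤ P 1 := (hP.2 1 h01).1
  have hp1 : P 1 ≤ 1 := (hP.2 1 h01).2
  have hPq0 : 0 ≤ P q := (hP.2 q hq0).1
  have hPq_le_q : P q ≤ q := (hP.2 q hq0).2
  -- key trick : if 0 ≤ u ≤ P f then u ≤ P u
  have trick : ∀ u f : E, u ≤ P f → u ≤ P u := by
    intro u f hu
    have h := (hP.2 (P f - u) (sub_nonneg.2 hu)).2
    rw [map_sub, hP.1 f] at h
    exact (sub_le_sub_iff_left (P f)).1 h
  have d1 : P q ⊓ (1 - P 1) = 0 := by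
    set u := P q ⊓ (1 - P 1) with hu
    have hu0 : 0 ≤ u := le_inf hPq0 (sub_nonneg.2 hp1)
    have h1 : u ≤ P u := trick u q inf_le_left
    have h2 : P u ≤ 0 := by
      have h3 : 0 ≤ P ((1 - P 1) - u) := (hP.2 _ (sub_nonneg.2 inf_le_right)).1
      rw [map_sub, map_sub, hP.1] at h3
      have h4 : P u ≤ P 1 - P 1 := sub_nonneg.1 h3
      simpa using h4
    exact le_antisymm (h1.trans h2) hu0
  have d2 : (q - P q) ⊓ P 1 = 0 := by
    set u := (q - P q) ⊓ P 1 with hu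
    have hu0 : 0 ≤ u := le_inf (sub_nonneg.2 hPq_le_q) hp0
    have h1 : u ≤ P u := trick u 1 inf_le_right
    have h2 : P u ≤ 0 := by
      have h3 : 0 ≤ P ((q - P q) - u) := (hP.2 _ (sub_nonneg.2 inf_le_left)).1
      rw [map_sub, map_sub, hP.1] at h3
      have h4 : P u ≤ P q - P q := sub_nonneg.1 h3
      simpa using h4
    exact le_antisymm (h1.trans h2) hu0
  have hz1 : (1 - P 1) * P q = 0 := aux_mul_disjoint hfalg (by rw [inf_comm]; exact d1)
  have hz2 : P 1 * (q - P q) = 0 := aux_mul_disjoint hfalg (by rw [inf_comm]; exact d2)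
  linear_combination hz1 - hz2

end Aux

/-- For pairwise compatible conditional expectation operators `T, U, V`
(with `U, V` averaging operators fixing `R(T)`) on a `T`-universally complete Riesz space
with weak order unit `e = Te`, one has `α_T(U,V) ≤ φ_T(U,V)` where
`α_T(U,V) = sup {|TPQe − TPe·TQe| : P ∈ B(U), Q ∈ B(V)}` and
`φ_T(U,V) = sup_{Q ∈ B(V)} ‖UQe − TQe‖_{T,∞}`. -/
theorem alpha_le_phi {E : Type*} [ConditionallyCompleteLattice E] [CommRing E]
    [CovariantClass E E (· + ·) (· ≤ ·)] [Module ℝ E]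
    (hmulpos : ∀ a b : E, 0 ≤ a → 0 ≤ b → 0 ≤ a * b)
    (hfalg : ∀ a b : E, a ⊓ b = 0 → ∀ w : E, 0 ≤ w → (w * a) ⊓ b = 0 ∧ (a * w) ⊓ b = 0)
    (T U V : E →ₗ[ℝ] E)
    (hTpos : ∀ f : E, 0 ≤ f → 0 ≤ T f) (hUpos : ∀ f : E, 0 ≤ f → 0 ≤ U f)
    (hVpos : ∀ f : E, 0 ≤ f → 0 ≤ V f)
    (hTproj : ∀ f : E, T (T f) = T f) (hUproj : ∀ f : E, U (U f) = U f)
    (hVproj : ∀ f : E, V (V f) = V f)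
    (hTU : ∀ f : E, T (U f) = T f) (hUT : ∀ f : E, U (T f) = T f)
    (hTV : ∀ f : E, T (V f) = T f) (hVT : ∀ f : E, V (T f) = T f)
    (e : E) (he : 0 ≤ e) (heunit : e = 1) (hTe : T e = e)
    (hTav : ∀ g f : E, g ∈ Set.range T → T (g * f) = g * T f)
    (hUav : ∀ g f : E, g ∈ Set.range U → U (g * f) = g * U f)
    (hVav : ∀ g f : E, g ∈ Set.range V → V (g * f) = g * V f)
    (hUfix : ∀ g ∈ Set.range T, U g = g) (hVfix : ∀ g ∈ Set.range T, V g = g) :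
    sSup {x : E | ∃ P Q : E →ₗ[ℝ] E, IsBandProj P ∧ P e ∈ Set.range U ∧
          IsBandProj Q ∧ Q e ∈ Set.range V ∧ x = |T (P (Q e)) - T (P e) * T (Q e)|}
      ≤ sSup {x : E | ∃ Q : E →ₗ[ℝ] E, IsBandProj Q ∧ Q e ∈ Set.range V ∧
          x = sInf {g : E | g ∈ Set.range T ∧ 0 ≤ g ∧ |U (Q e) - T (Q e)| ≤ g}} := by
  subst heunit
  -- basic consequences
  have hTmono : ∀ a b : E, a ≤ b → T a ≤ T b := by
    intro a b h
    have := hTpos (b - a) (sub_nonneg.2 h)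
    rw [map_sub] at this
    exact sub_nonneg.1 this
  have hUmono : ∀ a b : E, a ≤ b → U a ≤ U b := by
    intro a b h
    have := hUpos (b - a) (sub_nonneg.2 h)
    rw [map_sub] at this
    exact sub_nonneg.1 this
  have hUe : U 1 = 1 := by rw [← hTe, hUT, hTe]
  have hVe : V 1 = 1 := by rw [← hTe, hVT, hTe]
  -- |U (Q 1) - T (Q 1)| ≤ 1 for every band projection Q
  have habs1 : ∀ Q' : E →ₗ[ℝ] E, IsBandProj Q' → |U (Q' 1) - T (Q' 1)| ≤ 1 := by
    intro Q' hQ'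
    have hq0 : 0 ≤ Q' 1 := (hQ'.2 1 he).1
    have hqe : Q' 1 ≤ 1 := (hQ'.2 1 he).2
    have hU0 : 0 ≤ U (Q' 1) := hUpos _ hq0
    have hU1 : U (Q' 1) ≤ 1 := by
      have := hUmono _ _ hqe; rwa [hUe] at this
    have hT0 : 0 ≤ T (Q' 1) := hTpos _ hq0
    have hT1 : T (Q' 1) ≤ 1 := by
      have := hTmono _ _ hqe; rwa [hTe] at this
    refine abs_le'.2 ⟨?_, ?_⟩
    · calc U (Q' 1) - T (Q' 1) ≤ U (Q' 1) := sub_le_self _ hT0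
        _ ≤ 1 := hU1
    · calc -(U (Q' 1) - T (Q' 1)) = T (Q' 1) - U (Q' 1) := neg_sub _ _
        _ ≤ T (Q' 1) := sub_le_self _ hU0
        _ ≤ 1 := hT1
  -- the right-hand set is bounded above by 1
  have hbddS2 : BddAbove {x : E | ∃ Q : E →ₗ[ℝ] E, IsBandProj Q ∧ Q 1 ∈ Set.range V ∧
      x = sInf {g : E | g ∈ Set.range T ∧ 0 ≤ g ∧ |U (Q 1) - T (Q 1)| ≤ g}} := by
    refine ⟨1, ?_⟩
    rintro x ⟨Q', hQ', hQ'V, rfl⟩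
    exact csInf_le ⟨0, fun g hg => hg.2.1⟩ ⟨⟨1, hTe⟩, he, habs1 Q' hQ'⟩
  -- identity map shows the left set is nonempty
  have bp_id : IsBandProj (LinearMap.id : E →ₗ[ℝ] E) := ⟨fun f => rfl, fun f hf => ⟨hf, le_rfl⟩⟩
  refine csSup_le ⟨_, LinearMap.id, LinearMap.id, bp_id, ⟨1, hUe⟩, bp_id, ⟨1, hVe⟩, rfl⟩ ?_
  rintro x ⟨P, Q, hP, hPU, hQ, hQV, rfl⟩
  set q := Q 1 with hq
  set p := P 1 with hpdef
  have hq0 : 0 ≤ q := (hQ.2 1 he).1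
  have hqe : q ≤ 1 := (hQ.2 1 he).2
  have hp0 : 0 ≤ p := (hP.2 1 he).1
  have hpe : p ≤ 1 := (hP.2 1 he).2
  -- core estimate
  have core : ∀ g : E, g ∈ Set.range T → 0 ≤ g → |U q - T q| ≤ g →
      |T (P q) - T p * T q| ≤ g := by
    rintro g ⟨y, hy⟩ hg0 hgabs
    have hTg : T g = g := by rw [← hy, hTproj]
    set d := U q - T q with hd
    have hdg : d ≤ g := le_trans (le_abs_self d) hgabs
    have hdg' : -d ≤ g := le_trans (aux_neg_le_abs d) hgabs
    have hPq : P q = p * q := aux_bandproj_mul hfalg hP he hq0 hqe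
    have h1 : T (P q) = T (p * U q) := by
      rw [hPq, ← hTU (p * q), hUav p q hPU]
    have h2 : T p * T q = T (p * T q) := by
      calc T p * T q = T q * T p := mul_comm _ _
        _ = T (T q * p) := (hTav (T q) p ⟨q, rfl⟩).symm
        _ = T (p * T q) := by rw [mul_comm]
    have hdiff : T (P q) - T p * T q = T (p * d) := by
      rw [h1, h2, ← map_sub, ← mul_sub]
    -- |p * d| ≤ p * |d|
    have hi : p * d ≤ p * |d| := by
      have := hmulpos p (|d| - d) hp0 (sub_nonneg.2 (le_abs_self d))
      rw [mul_sub] at this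
      exact sub_nonneg.1 this
    have hii : -(p * d) ≤ p * |d| := by
      have hdd : 0 ≤ |d| + d := by
        have h := add_le_add_right (aux_neg_abs_le d) |d|
        calc (0:E) = -|d| + |d| := by ring
          _ ≤ d + |d| := by rw [add_comm (-|d|), add_comm d]; exact h
          _ = |d| + d := by ring
      have := hmulpos p (|d| + d) hp0 hdd
      rw [mul_add] at this
      exact aux_neg_le_of_add _ _ this
    have habs_pd : |p * d| ≤ p * |d| := abs_le'.2 ⟨hi, hii⟩
    -- p * |d| ≤ p * g ≤ g
    have hiii : p * |d| ≤ p * g := by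
      have := hmulpos p (g - |d|) hp0 (sub_nonneg.2 hgabs)
      rw [mul_sub] at this
      exact sub_nonneg.1 this
    have hiv : p * g ≤ g := by
      have := hmulpos (1 - p) g (sub_nonneg.2 hpe) hg0
      rw [one_sub_mul] at this
      exact sub_nonneg.1 this
    -- |T h| ≤ T |h|
    have hTabs : |T (p * d)| ≤ T |p * d| := by
      refine abs_le'.2 ⟨hTmono _ _ (le_abs_self _), ?_⟩
      have := hTmono (-(p * d)) |p * d| (aux_neg_le_abs _)
      rwa [map_neg] at this
    calc |T (P q) - T p * T q| = |T (p * d)| := by rw [hdiff]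
      _ ≤ T |p * d| := hTabs
      _ ≤ T (p * |d|) := hTmono _ _ habs_pd
      _ ≤ T (p * g) := hTmono _ _ hiii
      _ ≤ T g := hTmono _ _ hiv
      _ = g := hTg
  -- conclude
  have hxle : |T (P q) - T p * T q| ≤
      sInf {g : E | g ∈ Set.range T ∧ 0 ≤ g ∧ |U q - T q| ≤ g} := by
    refine le_csInf ⟨1, ⟨1, hTe⟩, he, habs1 Q hQ⟩ ?_
    rintro g ⟨hgr, hg0, hgabs⟩
    exact core g hgr hg0 hgabs
  refine hxle.trans (le_csSup hbddS2 ⟨Q, hQ, hQV, rfl⟩)
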